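/- Consider the cycle graph on 4k vertices (k ≥ 1) with the fractional matching p assigning weight 1/2 to every edge. The cycle has exactly two perfect matchings M_odd (edges (2i-1, 2i)) and M_even (edges (2i, 2i+1), indices mod 4k). For the cut given by S = {1, 2, 5, 6, 9, 10, ..., 4i+1, 4i+2, ...}, the cut weight of p is k, while the number of edges of M_even crossing the cut is 2k and the number of edges of M_odd crossing the cut is 0. -/
import Mathlib

private lemma count_odd (n : ℕ) :
    ((Finset.range n).filter (fun i => i % 2 = 1)).card = n / 2 := by
  induction n with
  | zero => simp
  | succ m ih =>
    rw [Finset.range_add_one, Finset.filter_insert]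
    by_cases h : m % 2 = 1
    · rw [if_pos h, Finset.card_insert_of_notMem (by simp)]
      omega
    · rw [if_neg h]; omega

private lemma crossS (k : ℕ) (hk : 1 ≤ k) (S : Finset ℕ)
    (hS : S = (Finset.range (4 * k)).filter (fun v => v % 4 = 0 ∨ v % 4 = 1))
    (i : ℕ) (hi : i < 4 * k) :
    (¬((i ∈ S) ↔ ((i + 1) % (4 * k)) ∈ S)) ↔ i % 2 = 1 := by
  subst hS
  simp only [Finset.mem_filter, Finset.mem_range]
  rcases Nat.lt_or_ge (i + 1) (4 * k) with h | h
  · rw [Nat.mod_eq_of_lt h]; omega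
  · have h2 : i + 1 = 4 * k := by omega
    rw [h2, Nat.mod_self]; omega

private lemma succ_mod (k i v : ℕ) (hk : 1 ≤ k) (hi : i < 4 * k) (hv : v < 4 * k) :
    ((i + 1) % (4 * k) = v) ↔ (i + 1 = v ∨ (i = 4 * k - 1 ∧ v = 0)) := by
  rcases Nat.lt_or_ge (i + 1) (4 * k) with h | h
  · rw [Nat.mod_eq_of_lt h]; omega
  · have h2 : i + 1 = 4 * k := by omega
    rw [h2, Nat.mod_self]; omega

private lemma pair_card (Me : Finset ℕ) (v w : ℕ) (hne : v ≠ w) :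
    (Me.filter (fun i => i = v ∨ i = w)).card = 1 ↔ (v ∈ Me ↔ w ∉ Me) := by
  by_cases hv : v ∈ Me <;> by_cases hw : w ∈ Me
  · have h : Me.filter (fun i => i = v ∨ i = w) = {v, w} := by
      ext i
      simp only [Finset.mem_filter, Finset.mem_insert, Finset.mem_singleton]
      constructor
      · rintro ⟨_, h | h⟩ <;> simp [h]
      · rintro (rfl | rfl) <;> simp [hv, hw]
    rw [h, Finset.card_pair hne]
    simp [hv, hw]
  · have h : Me.filter (fun i => i = v ∨ i = w) = {v} := by
      ext i
      simp only [Finset.mem_filter, Finset.mem_singleton]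
      constructor
      · rintro ⟨hi, rfl | rfl⟩ <;> [rfl; exact absurd hi hw]
      · rintro rfl; exact ⟨hv, Or.inl rfl⟩
    rw [h]; simp [hv, hw]
  · have h : Me.filter (fun i => i = v ∨ i = w) = {w} := by
      ext i
      simp only [Finset.mem_filter, Finset.mem_singleton]
      constructor
      · rintro ⟨hi, rfl | rfl⟩ <;> [exact absurd hi hv; rfl]
      · rintro rfl; exact ⟨hw, Or.inr rfl⟩
    rw [h]; simp [hv, hw]
  · have h : Me.filter (fun i => i = v ∨ i = w) = ∅ := by
      rw [Finset.filter_eq_empty_iff]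
      rintro i hi (rfl | rfl) <;> [exact hv hi; exact hw hi]
    rw [h]; simp [hv, hw]

/-- The 4k-cycle example (vertices `0,…,4k-1`, edge `i` joining `i` and `(i+1) % 4k`,
corresponding to the 1-indexed vertices `1,…,4k` of the paper): the fractional matching
giving weight 1/2 to each edge has weight `k` across the cut
`S = {1,2,5,6,…}` (0-indexed: vertices `≡ 0,1 (mod 4)`); the cycle has exactly two
perfect matchings, the odd edges `M_odd` (0-indexed even `i`) and the even edges
`M_even` (0-indexed odd `i`); `M_even` has `2k` edges across the cut and `M_odd` has none. -/
theorem stmt19 (k : ℕ) (hk : 1 ≤ k)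
    (S : Finset ℕ)
    (hS : S = (Finset.range (4 * k)).filter (fun v => v % 4 = 0 ∨ v % 4 = 1))
    (Modd Meven : Finset ℕ)
    (hModd : Modd = (Finset.range (4 * k)).filter (fun i => i % 2 = 0))
    (hMeven : Meven = (Finset.range (4 * k)).filter (fun i => i % 2 = 1)) :
    -- the cut weight of the all-1/2 fractional matching is k
    (∑ i ∈ Finset.range (4 * k),
        if ¬((i ∈ S) ↔ ((i + 1) % (4 * k)) ∈ S) then (1 / 2 : ℝ) else 0) = k ∧
    -- the cycle has exactly two perfect matchings, Modd and Meven
    (∀ Me ⊆ Finset.range (4 * k),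
      ((∀ v ∈ Finset.range (4 * k),
          (Me.filter (fun i => i = v ∨ (i + 1) % (4 * k) = v)).card = 1) ↔
        (Me = Modd ∨ Me = Meven))) ∧
    -- Meven has 2k edges across the cut, Modd has none
    (Meven.filter (fun i => ¬((i ∈ S) ↔ ((i + 1) % (4 * k)) ∈ S))).card = 2 * k ∧
    (Modd.filter (fun i => ¬((i ∈ S) ↔ ((i + 1) % (4 * k)) ∈ S))).card = 0 := by
  refine ⟨?_, ?_, ?_, ?_⟩
  · -- cut weight is k
    have hsum : ∀ i ∈ Finset.range (4 * k),
        (if ¬((i ∈ S) ↔ ((i + 1) % (4 * k)) ∈ S) then (1 / 2 : ℝ) else 0)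
          = (if i % 2 = 1 then (1 / 2 : ℝ) else 0) := by
      intro i hi
      rw [Finset.mem_range] at hi
      exact if_congr (crossS k hk S hS i hi) rfl rfl
    rw [Finset.sum_congr rfl hsum, ← Finset.sum_filter, Finset.sum_const, count_odd]
    have h2 : 4 * k / 2 = 2 * k := by omega
    rw [h2, nsmul_eq_mul]
    push_cast
    ring
  · -- the two perfect matchings
    intro Me hMe
    set p : ℕ → ℕ := fun v => if v = 0 then 4 * k - 1 else v - 1 with hp
    have hfilter : ∀ v < 4 * k,
        Me.filter (fun i => i = v ∨ (i + 1) % (4 * k) = v)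
          = Me.filter (fun i => i = v ∨ i = p v) := by
      intro v hv
      apply Finset.filter_congr
      intro i hi
      have hik : i < 4 * k := Finset.mem_range.mp (hMe hi)
      rw [succ_mod k i v hk hik hv]
      by_cases hv0 : v = 0 <;> simp only [hp, hv0, if_pos, if_neg] <;> simp <;> omega
    have hne : ∀ v < 4 * k, v ≠ p v := by
      intro v hv
      simp only [hp]
      split_ifs <;> omega
    constructor
    · intro hpm
      have H : ∀ v < 4 * k, (v ∈ Me ↔ p v ∉ Me) := by
        intro v hv
        have h1 := hpm v (Finset.mem_range.mpr hv)
        rw [hfilter v hv] at h1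
        exact (pair_card Me v (p v) (hne v hv)).mp h1
      have C : ∀ v, v < 4 * k → (v ∈ Me ↔ (v % 2 = 0 ↔ 0 ∈ Me)) := by
        intro v
        induction v with
        | zero => intro _; simp
        | succ n ih =>
          intro hv
          have h1 := H (n + 1) hv
          have h2 := ih (by omega)
          have hp1 : p (n + 1) = n := by simp [hp]
          rw [hp1] at h1
          rw [h1, h2]
          by_cases h0 : 0 ∈ Me <;> simp [h0] <;> omega
      by_cases h0 : 0 ∈ Me
      · left
        subst hModd
        ext i
        simp only [Finset.mem_filter, Finset.mem_range]
        constructor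
        · intro hi
          have hik : i < 4 * k := Finset.mem_range.mp (hMe hi)
          have := (C i hik).mp hi
          simp [h0] at this
          exact ⟨hik, this⟩
        · rintro ⟨h1, h2⟩
          exact (C i h1).mpr (by simp [h0, h2])
      · right
        subst hMeven
        ext i
        simp only [Finset.mem_filter, Finset.mem_range]
        constructor
        · intro hi
          have hik : i < 4 * k := Finset.mem_range.mp (hMe hi)
          have := (C i hik).mp hi
          simp [h0] at this
          exact ⟨hik, by omega⟩
        · rintro ⟨h1, h2⟩
          exact (C i h1).mpr (by simp [h0]; omega)
    · rintro (rfl | rfl) <;>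
      · intro v hv
        rw [Finset.mem_range] at hv
        rw [hfilter v hv, pair_card _ _ _ (hne v hv)]
        subst hModd hMeven
        simp only [Finset.mem_filter, Finset.mem_range, hp]
        split_ifs <;> omega
  · -- Meven crosses 2k times
    have h : Meven.filter (fun i => ¬((i ∈ S) ↔ ((i + 1) % (4 * k)) ∈ S)) = Meven := by
      apply Finset.filter_true_of_mem
      intro i hi
      rw [hMeven, Finset.mem_filter, Finset.mem_range] at hi
      exact (crossS k hk S hS i hi.1).mpr hi.2
    rw [h, hMeven, count_odd]
    omega
  · -- Modd crosses 0 times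
    have h : Modd.filter (fun i => ¬((i ∈ S) ↔ ((i + 1) % (4 * k)) ∈ S)) = ∅ := by
      rw [Finset.filter_eq_empty_iff]
      intro i hi
      rw [hModd, Finset.mem_filter, Finset.mem_range] at hi
      rw [crossS k hk S hS i hi.1]
      omega
    rw [h]
    simp
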